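/- Let k₁, k₂, m₁, m₂ be positive integers and φ, ψ : ℍ × ℂ² → ℂ holomorphic functions satisfying the modular transformation φ(Mτ, z₁/(cτ+d), z₂/(cτ+d)) = (cτ+d)^{k₁} exp(2πi m₁ c z₁z₂/(cτ+d)) φ(τ,z₁,z₂) for all M = [[a,b],[c,d]] ∈ SL(2,ℤ), and similarly for ψ with (k₂, m₂). Then F = m₁ φ ∂ψ/∂z₂ − m₂ ψ ∂φ/∂z₂ satisfies the same modular transformation with weight k₁ + k₂ + 1 and index m₁ + m₂. -/

import Mathlib

open Complex

lemma my_denom_ne_zero (M : Matrix.SpecialLinearGroup (Fin 2) ℤ) (τ : ℂ) (hτ : 0 < τ.im) :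
    ((M 1 0 : ℤ) : ℂ) * τ + ((M 1 1 : ℤ) : ℂ) ≠ 0 := by
  intro h
  have him := congrArg Complex.im h
  simp [Complex.add_im, Complex.mul_im] at him
  have hc : (M 1 0 : ℤ) = 0 := by
    rcases him with h' | h'
    · exact_mod_cast h'
    · linarith
  have hd : (M 1 1 : ℤ) = 0 := by
    rw [hc] at h; push_cast at h; simpa using h
  have hdet := M.2
  rw [Matrix.det_fin_two] at hdet
  rw [hc, hd] at hdet
  simp at hdet

lemma my_deriv_transform (j C : ℂ) (hj : j ≠ 0) (g f : ℂ → ℂ)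
    (hf : Differentiable ℂ f) (k : ℕ)
    (h : ∀ w, g (w / j) = j ^ k * Complex.exp (C * w) * f w) (z : ℂ) :
    deriv g (z / j) = j ^ k * Complex.exp (C * z) * (C * f z + deriv f z) * j := by
  have hgf : g = fun u => j ^ k * Complex.exp (C * (j * u)) * f (j * u) := by
    funext u
    have := h (j * u)
    rwa [mul_div_cancel_left₀ _ hj] at this
  have hjz : j * (z / j) = z := by field_simp
  have h1 : HasDerivAt (fun u : ℂ => C * (j * u)) (C * j) (z / j) := by
    have heq : (fun u : ℂ => C * (j * u)) = (fun u : ℂ => C * j * u) := by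
      funext u; ring
    rw [heq]
    simpa using (hasDerivAt_id (z / j)).const_mul (C * j)
  have h2 := h1.cexp
  have hinner : HasDerivAt (fun u : ℂ => j * u) j (z / j) := by
    simpa using (hasDerivAt_id (z / j)).const_mul j
  have h3 : HasDerivAt (fun u : ℂ => f (j * u)) (deriv f (j * (z / j)) * j) (z / j) :=
    (hf (j * (z / j))).hasDerivAt.comp (z / j) hinner
  have total : HasDerivAt (fun u => j ^ k * Complex.exp (C * (j * u)) * f (j * u)) _ (z / j) :=
    (h2.const_mul (j ^ k)).mul h3
  rw [hgf, total.deriv, hjz]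
  ring
theorem derivative_construction_modular (k₁ k₂ m₁ m₂ : ℕ)
    (hk₁ : 0 < k₁) (hk₂ : 0 < k₂) (hm₁ : 0 < m₁) (hm₂ : 0 < m₂)
    (φ ψ : ℂ → ℂ → ℂ → ℂ)
    (hφd : ∀ τ z₁ : ℂ, Differentiable ℂ (φ τ z₁))
    (hψd : ∀ τ z₁ : ℂ, Differentiable ℂ (ψ τ z₁))
    (hφ : ∀ M : Matrix.SpecialLinearGroup (Fin 2) ℤ, ∀ τ z₁ z₂ : ℂ, 0 < τ.im →
      φ (((M 0 0 : ℤ) * τ + (M 0 1 : ℤ)) / ((M 1 0 : ℤ) * τ + (M 1 1 : ℤ)))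
        (z₁ / ((M 1 0 : ℤ) * τ + (M 1 1 : ℤ)))
        (z₂ / ((M 1 0 : ℤ) * τ + (M 1 1 : ℤ))) =
      ((M 1 0 : ℤ) * τ + (M 1 1 : ℤ)) ^ k₁ *
        Complex.exp (2 * Real.pi * Complex.I * m₁ * (M 1 0 : ℤ) * z₁ * z₂ /
          ((M 1 0 : ℤ) * τ + (M 1 1 : ℤ))) * φ τ z₁ z₂)
    (hψ : ∀ M : Matrix.SpecialLinearGroup (Fin 2) ℤ, ∀ τ z₁ z₂ : ℂ, 0 < τ.im →
      ψ (((M 0 0 : ℤ) * τ + (M 0 1 : ℤ)) / ((M 1 0 : ℤ) * τ + (M 1 1 : ℤ)))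
        (z₁ / ((M 1 0 : ℤ) * τ + (M 1 1 : ℤ)))
        (z₂ / ((M 1 0 : ℤ) * τ + (M 1 1 : ℤ))) =
      ((M 1 0 : ℤ) * τ + (M 1 1 : ℤ)) ^ k₂ *
        Complex.exp (2 * Real.pi * Complex.I * m₂ * (M 1 0 : ℤ) * z₁ * z₂ /
          ((M 1 0 : ℤ) * τ + (M 1 1 : ℤ))) * ψ τ z₁ z₂) :
    ∀ M : Matrix.SpecialLinearGroup (Fin 2) ℤ, ∀ τ z₁ z₂ : ℂ, 0 < τ.im →
      (fun τ' z₁' z₂' => (m₁ : ℂ) * φ τ' z₁' z₂' * deriv (ψ τ' z₁') z₂'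
          - (m₂ : ℂ) * ψ τ' z₁' z₂' * deriv (φ τ' z₁') z₂')
        (((M 0 0 : ℤ) * τ + (M 0 1 : ℤ)) / ((M 1 0 : ℤ) * τ + (M 1 1 : ℤ)))
        (z₁ / ((M 1 0 : ℤ) * τ + (M 1 1 : ℤ)))
        (z₂ / ((M 1 0 : ℤ) * τ + (M 1 1 : ℤ))) =
      ((M 1 0 : ℤ) * τ + (M 1 1 : ℤ)) ^ (k₁ + k₂ + 1) *
        Complex.exp (2 * Real.pi * Complex.I * ((m₁ : ℂ) + m₂) * (M 1 0 : ℤ) * z₁ * z₂ /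
          ((M 1 0 : ℤ) * τ + (M 1 1 : ℤ))) *
        ((m₁ : ℂ) * φ τ z₁ z₂ * deriv (ψ τ z₁) z₂
          - (m₂ : ℂ) * ψ τ z₁ z₂ * deriv (φ τ z₁) z₂) := by
  intro M τ z₁ z₂ hτ
  set j : ℂ := ((M 1 0 : ℤ) : ℂ) * τ + ((M 1 1 : ℤ) : ℂ) with hjdef
  have hj : j ≠ 0 := my_denom_ne_zero M τ hτ
  set T : ℂ := (((M 0 0 : ℤ) : ℂ) * τ + ((M 0 1 : ℤ) : ℂ)) / j with hTdef
  set c : ℂ := ((M 1 0 : ℤ) : ℂ) with hcdef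
  set C₁ : ℂ := 2 * Real.pi * Complex.I * m₁ * c * z₁ / j with hC1
  set C₂ : ℂ := 2 * Real.pi * Complex.I * m₂ * c * z₁ / j with hC2
  have hφw : ∀ w : ℂ, φ T (z₁ / j) (w / j) = j ^ k₁ * Complex.exp (C₁ * w) * φ τ z₁ w := by
    intro w
    have := hφ M τ z₁ w hτ
    rw [this]
    congr 2
    rw [hC1, hjdef, hcdef]; ring
  have hψw : ∀ w : ℂ, ψ T (z₁ / j) (w / j) = j ^ k₂ * Complex.exp (C₂ * w) * ψ τ z₁ w := by
    intro w
    have := hψ M τ z₁ w hτ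
    rw [this]
    congr 2
    rw [hC2, hjdef, hcdef]; ring
  have hdφ := my_deriv_transform j C₁ hj (φ T (z₁ / j)) (φ τ z₁) (hφd τ z₁) k₁ hφw z₂
  have hdψ := my_deriv_transform j C₂ hj (ψ T (z₁ / j)) (ψ τ z₁) (hψd τ z₁) k₂ hψw z₂
  have hE : Complex.exp (2 * Real.pi * Complex.I * ((m₁ : ℂ) + m₂) * c * z₁ * z₂ / j)
      = Complex.exp (C₁ * z₂) * Complex.exp (C₂ * z₂) := by
    rw [← Complex.exp_add]
    congr 1
    rw [hC1, hC2]; ring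
  simp only []
  rw [hφw z₂, hψw z₂, hdφ, hdψ, hE, hC1, hC2]
  ring
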